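/- The K-linear map Φ : Iuₙ → Iuₙ determined on the basis by Φ(x_{ij}) = x_{n+1−j, n+1−i}, Φ(a_i) = a_{n+1−i}, Φ(b_i) = b_{n+1−i} is a Lie algebra anti-automorphism of Iuₙ: it is a linear bijection satisfying Φ([u, v]) = [Φ(v), Φ(u)] for all u, v ∈ Iuₙ. -/

import Mathlib

/-- Index set for the basis of `Iuₙ`: the off-diagonal pairs indexing the `x_{ij}` (`i ≠ j`),
then the `a_i`'s, then the `b_i`'s. -/
abbrev IuIdx (n : ℕ) : Type := { p : Fin n × Fin n // p.1 ≠ p.2 } ⊕ (Fin n ⊕ Fin n)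

/-- `Iuₙ`: the free `K`-vector space on the basis `{x_{ij} : i ≠ j} ∪ {a_i} ∪ {b_i}`. -/
abbrev Iu (n : ℕ) (K : Type*) [Field K] : Type _ := IuIdx n →₀ K

variable (n : ℕ) (K : Type*) [Field K]

/-- The basis element `x_{ij}` (`i ≠ j`). -/
noncomputable def xE (i j : Fin n) (h : i ≠ j) : Iu n K :=
  Finsupp.single (Sum.inl ⟨(i, j), h⟩) 1

/-- The basis element `a_i`. -/
noncomputable def aE (i : Fin n) : Iu n K := Finsupp.single (Sum.inr (Sum.inl i)) 1

/-- The basis element `b_i`. -/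
noncomputable def bE (i : Fin n) : Iu n K := Finsupp.single (Sum.inr (Sum.inr i)) 1

/-- `x_{ij}` as a total function (junk value `0` when `i = j`). -/
noncomputable def xe (i j : Fin n) : Iu n K := if h : i ≠ j then xE n K i j h else 0

/-- The length `λ(i,j)`: equals `j - i` if `i < j`, and `n - (i - j)` if `i > j`. -/
def lam (n : ℕ) (i j : Fin n) : ℕ := (j - i : Fin n).val

/-- The bracket of `Iuₙ` on basis elements:
`[x_{ij}, x_{kl}] = δ_{jk} x_{il} - δ_{li} x_{kj}` if `λ(i,j) + λ(k,l) < n` and `0` otherwise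
(unless both `j = k` and `l = i`); `[x_{ij}, x_{ji}] = ½(b_i - b_j)`;
`[a_i, x_{jk}] = (δ_{ij} - δ_{ik}) x_{jk}`; `[b_i, x_{jk}] = 0`;
`[a_i, a_j] = [b_i, b_j] = [a_i, b_j] = 0`; extended antisymmetrically. -/
noncomputable def bb : IuIdx n → IuIdx n → Iu n K
  | Sum.inl ⟨(i, j), _⟩, Sum.inl ⟨(k, l), _⟩ =>
      if k = j ∧ l = i then ((2 : K)⁻¹) • (bE n K i - bE n K j)
      else if lam n i j + lam n k l < n then
        (if j = k then xe n K i l else 0) - (if l = i then xe n K k j else 0)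
      else 0
  | Sum.inr (Sum.inl i), Sum.inl ⟨(j, k), _⟩ =>
      (((if i = j then 1 else 0) : K) - ((if i = k then 1 else 0) : K)) • xe n K j k
  | Sum.inl ⟨(j, k), _⟩, Sum.inr (Sum.inl i) =>
      -((((if i = j then 1 else 0) : K) - ((if i = k then 1 else 0) : K)) • xe n K j k)
  | _, _ => 0

/-- The bilinear bracket of `Iuₙ`, extended bilinearly from its values on basis elements. -/
noncomputable def br : Iu n K →ₗ[K] Iu n K →ₗ[K] Iu n K :=
  Finsupp.lift (Iu n K →ₗ[K] Iu n K) K (IuIdx n) fun s =>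
    Finsupp.lift (Iu n K) K (IuIdx n) fun t => bb n K s t

/-- The linear map `Φ`, determined on the basis by `x_{ij} ↦ x_{n+1-j, n+1-i}`,
`a_i ↦ a_{n+1-i}`, `b_i ↦ b_{n+1-i}` (in 0-indexed terms, the index map is `Fin.rev`). -/
noncomputable def Phi : Iu n K →ₗ[K] Iu n K :=
  Finsupp.lift (Iu n K) K (IuIdx n) fun t =>
    match t with
    | Sum.inl ⟨(i, j), _⟩ => xe n K j.rev i.rev
    | Sum.inr (Sum.inl i) => aE n K i.rev
    | Sum.inr (Sum.inr i) => bE n K i.rev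

-- auxiliary lemmas
lemma lam_rev (i j : Fin n) : lam n j.rev i.rev = lam n i j := by
  rcases Nat.eq_zero_or_pos n with h | h
  · exact absurd i.isLt (by omega)
  unfold lam
  have hi := i.isLt; have hj := j.isLt
  simp only [Fin.sub_def, Fin.val_rev]
  congr 1
  omega

lemma phi_single (t : IuIdx n) : Phi n K (Finsupp.single t 1) =
    (match t with
    | Sum.inl ⟨(i, j), _⟩ => xe n K j.rev i.rev
    | Sum.inr (Sum.inl i) => aE n K i.rev
    | Sum.inr (Sum.inr i) => bE n K i.rev) := by
  simp [Phi, Finsupp.lift_apply, Finsupp.sum_single_index]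

lemma br_single (s t : IuIdx n) :
    br n K (Finsupp.single s 1) (Finsupp.single t 1) = bb n K s t := by
  simp [br, Finsupp.lift_apply, Finsupp.sum_single_index]

lemma phi_xe (i j : Fin n) : Phi n K (xe n K i j) = xe n K j.rev i.rev := by
  by_cases h : i = j
  · simp [xe, h]
  · have hr : j.rev ≠ i.rev := fun hc => h (by simpa [Fin.rev_inj] using hc.symm)
    simp only [xe, dif_pos h, dif_pos hr]
    simp only [Phi, xE, Finsupp.lift_apply]
    rw [Finsupp.sum_single_index (by simp)]
    simp [xe, hr, xE]

lemma phi_bE (i : Fin n) : Phi n K (bE n K i) = bE n K i.rev := by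
  simp [bE, Phi, Finsupp.lift_apply, Finsupp.sum_single_index]

lemma phi_aE (i : Fin n) : Phi n K (aE n K i) = aE n K i.rev := by
  simp [aE, Phi, Finsupp.lift_apply, Finsupp.sum_single_index]

lemma phi_invol (u : Iu n K) : Phi n K (Phi n K u) = u := by
  have h : ∀ t : IuIdx n, Phi n K (Phi n K (Finsupp.single t 1)) = Finsupp.single t 1 := by
    intro t
    rcases t with ⟨⟨i, j⟩, hij⟩ | i | i
    · rw [phi_single]
      show Phi n K (xe n K j.rev i.rev) = _
      rw [phi_xe]
      simp [Fin.rev_rev, xe, hij, xE]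
    · rw [phi_single]
      show Phi n K (aE n K i.rev) = _
      rw [phi_aE]; simp [Fin.rev_rev, aE]
    · rw [phi_single]
      show Phi n K (bE n K i.rev) = _
      rw [phi_bE]; simp [Fin.rev_rev, bE]
  induction u using Finsupp.induction_linear with
  | zero => simp
  | add f g hf hg => simp [map_add, hf, hg]
  | single a b =>
      have e : (Finsupp.single a b : Iu n K) = b • Finsupp.single a 1 := by
        rw [Finsupp.smul_single']; ring_nf
      rw [e, map_smul, map_smul, h]

lemma key (s t : IuIdx n) :
    Phi n K (br n K (Finsupp.single s 1) (Finsupp.single t 1)) =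
      br n K (Phi n K (Finsupp.single t 1)) (Phi n K (Finsupp.single s 1)) := by
  rw [br_single]
  rcases s with ⟨⟨i, j⟩, hij⟩ | i | i <;> rcases t with ⟨⟨k, l⟩, hkl⟩ | m | m
  · -- x x
    have hji : j.rev ≠ i.rev := fun hc => hij (by simpa [Fin.rev_inj] using hc.symm)
    have hlk : l.rev ≠ k.rev := fun hc => hkl (by simpa [Fin.rev_inj] using hc.symm)
    rw [phi_single, phi_single]
    show Phi n K _ = br n K (xe n K l.rev k.rev) (xe n K j.rev i.rev)
    rw [xe, dif_pos hlk, xe, dif_pos hji, xE, xE, br_single]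
    show Phi n K (bb n K (Sum.inl ⟨(i, j), hij⟩) (Sum.inl ⟨(k, l), hkl⟩)) = _
    simp only [bb]
    by_cases h1 : k = j ∧ l = i
    · obtain ⟨hk, hl⟩ := h1
      subst hk; subst hl
      rw [if_pos ⟨rfl, rfl⟩, if_pos ⟨rfl, rfl⟩]
      simp [map_smul, map_sub, phi_bE]
    · have h1' : ¬(j.rev = k.rev ∧ i.rev = l.rev) := by
        simp only [Fin.rev_inj]; tauto
      by_cases h2 : lam n i j + lam n k l < n
      · have h2' : lam n l.rev k.rev + lam n j.rev i.rev < n := by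
          rw [lam_rev, lam_rev]; omega
        rw [if_neg h1, if_neg h1', if_pos h2, if_pos h2', map_sub]
        simp only [apply_ite (Phi n K), map_zero, phi_xe, Fin.rev_inj]
        rcases eq_or_ne j k with hjk | hjk <;> rcases eq_or_ne l i with hli | hli
        · subst hjk; subst hli; simp
        · subst hjk; simp [hli, Ne.symm hli]
        · subst hli; simp [hjk, Ne.symm hjk]
        · simp [hjk, hli, Ne.symm hjk, Ne.symm hli]
      · have h2' : ¬(lam n l.rev k.rev + lam n j.rev i.rev < n) := by
          rw [lam_rev, lam_rev]; omega
        rw [if_neg h1, if_neg h1', if_neg h2, if_neg h2', map_zero]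
  · -- x a
    rw [phi_single, phi_single]
    show Phi n K _ = br n K (aE n K m.rev) (xe n K j.rev i.rev)
    have hji : j.rev ≠ i.rev := fun hc => hij (by simpa [Fin.rev_inj] using hc.symm)
    rw [xe, dif_pos hji, aE, xE, br_single]
    show Phi n K (bb n K (Sum.inl ⟨(i, j), hij⟩) (Sum.inr (Sum.inl m))) = _
    simp only [bb]
    rw [map_neg, map_smul, phi_xe]
    simp only [Fin.rev_inj]
    have hij' : i ≠ j := hij
    by_cases h1 : m = i <;> by_cases h2 : m = j
    · exact absurd (h1.symm.trans h2) hij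
    all_goals simp [h1, h2, hij', Ne.symm hij', ← neg_smul, neg_sub, neg_one_smul]
  · -- x b
    rw [phi_single, phi_single]
    show Phi n K _ = br n K (bE n K m.rev) (xe n K j.rev i.rev)
    have hji : j.rev ≠ i.rev := fun hc => hij (by simpa [Fin.rev_inj] using hc.symm)
    rw [xe, dif_pos hji, bE, xE, br_single]
    show Phi n K (0 : Iu n K) = bb n K _ _
    simp [bb]
  · -- a x
    rw [phi_single, phi_single]
    show Phi n K _ = br n K (xe n K l.rev k.rev) (aE n K i.rev)
    have hlk : l.rev ≠ k.rev := fun hc => hkl (by simpa [Fin.rev_inj] using hc.symm)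
    rw [xe, dif_pos hlk, aE, xE, br_single]
    show Phi n K (bb n K (Sum.inr (Sum.inl i)) (Sum.inl ⟨(k, l), hkl⟩)) = _
    simp only [bb]
    rw [map_smul, phi_xe]
    simp only [Fin.rev_inj]
    have hkl' : k ≠ l := hkl
    by_cases h1 : i = k <;> by_cases h2 : i = l
    · exact absurd (h1.symm.trans h2) hkl
    all_goals simp [h1, h2, hkl', Ne.symm hkl', ← neg_smul, neg_sub, neg_one_smul]
  · rw [phi_single, phi_single]
    show Phi n K _ = br n K (aE n K m.rev) (aE n K i.rev)
    rw [aE, aE, br_single]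
    show Phi n K (0 : Iu n K) = bb n K _ _
    simp [bb]
  · rw [phi_single, phi_single]
    show Phi n K _ = br n K (bE n K m.rev) (aE n K i.rev)
    rw [aE, bE, br_single]
    show Phi n K (0 : Iu n K) = bb n K _ _
    simp [bb]
  · rw [phi_single, phi_single]
    show Phi n K _ = br n K (xe n K l.rev k.rev) (bE n K i.rev)
    have hlk : l.rev ≠ k.rev := fun hc => hkl (by simpa [Fin.rev_inj] using hc.symm)
    rw [xe, dif_pos hlk, bE, xE, br_single]
    show Phi n K (0 : Iu n K) = bb n K _ _
    simp [bb]
  · rw [phi_single, phi_single]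
    show Phi n K _ = br n K (aE n K m.rev) (bE n K i.rev)
    rw [aE, bE, br_single]
    show Phi n K (0 : Iu n K) = bb n K _ _
    simp [bb]
  · rw [phi_single, phi_single]
    show Phi n K _ = br n K (bE n K m.rev) (bE n K i.rev)
    rw [bE, bE, br_single]
    show Phi n K (0 : Iu n K) = bb n K _ _
    simp [bb]


/-- `Φ` is a Lie algebra anti-automorphism of `Iuₙ`. -/
theorem stmt7 (n : ℕ) (hn : 2 ≤ n) (K : Type*) [Field K] (hK : (2 : K) ≠ 0) :
    Function.Bijective (Phi n K) ∧
    ∀ u v : Iu n K, Phi n K (br n K u v) = br n K (Phi n K v) (Phi n K u) := by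
  refine ⟨Function.Involutive.bijective (phi_invol n K), ?_⟩
  intro u v
  induction u using Finsupp.induction_linear with
  | zero => simp
  | add f g hf hg => simp [map_add, hf, hg]
  | single a c =>
    induction v using Finsupp.induction_linear with
    | zero => simp
    | add f g hf hg => simp [map_add, hf, hg]
    | single b d =>
      have ea : (Finsupp.single a c : Iu n K) = c • Finsupp.single a 1 := by
        rw [Finsupp.smul_single']; ring_nf
      have eb : (Finsupp.single b d : Iu n K) = d • Finsupp.single b 1 := by
        rw [Finsupp.smul_single']; ring_nf
      rw [ea, eb]
      simp only [map_smul, LinearMap.smul_apply, LinearMap.map_smul]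
      rw [key]
      rw [smul_comm]
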